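/- If Π_n is an exchangeable random partition of [n] and Π_n' is obtained from Π_n by one step of the sample-and-add operation SA_n, then Π_n' is exchangeable. -/

import Mathlib

open scoped Classical

/-- The (finite) collection of multisets `{k₁,…,k_r}` with `r ≥ 1`, all `kᵢ ≥ 2` and
`∑ kᵢ ≤ n`, indexing the collision entries `q(n:k₁,…,k_r;s)` (`s = n - ∑ kᵢ`). -/
def collisionSets (n : ℕ) : Finset (Multiset ℕ) :=
  (((Finset.Icc 2 n).val.bind fun j => Multiset.replicate n j).powerset.toFinset).filter
    fun K => K ≠ 0 ∧ (∀ k ∈ K, 2 ≤ k) ∧ K.sum ≤ n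

def IsPartitionOf (n : ℕ) (P : Finset (Finset (Fin n))) : Prop :=
  (∅ : Finset (Fin n)) ∉ P ∧
  (∀ A ∈ P, ∀ B ∈ P, A ≠ B → Disjoint A B) ∧
  ∀ x : Fin n, ∃ A ∈ P, x ∈ A

/-- The `q(n:1)`-move of the sample-and-add operation: remove the ball `b` from its box and
put it in a new singleton box (deleting any box left empty). -/
def addSingleton {n : ℕ} (P : Finset (Finset (Fin n))) (b : Fin n) :
    Finset (Finset (Fin n)) :=
  insert {b} ((P.image fun A => A.erase b).erase ∅)

/-- Destination map of a collision move: a ball lying in the sampled set `A i` moves to the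
(box of the) marked ball `t i`; other balls stay put. -/
noncomputable def dest {n : ℕ} (A : Fin n → Finset (Fin n)) (t : Fin n → Fin n)
    (x : Fin n) : Fin n :=
  if h : ∃ i, x ∈ A i then t h.choose else x

/-- Result of the collision move with sampled sets `A` and marked balls `t`: every ball `x`
joins the box containing `dest A t x`; empty boxes are deleted. -/
noncomputable def mergeMove {n : ℕ} (P : Finset (Finset (Fin n)))
    (A : Fin n → Finset (Fin n)) (t : Fin n → Fin n) : Finset (Finset (Fin n)) :=
  (P.image fun B => Finset.univ.filter fun x => dest A t x ∈ B).erase ∅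

/-- Configurations of the sampling step for the collision multiset `K = {k₁,…,k_r}` (listed
in increasing order): pairwise disjoint sampled sets `A i` of sizes `kᵢ - 1` (`i < r`),
together with `r` distinct marked balls `t i` outside all sampled sets.  (Coordinates with
index `≥ r` are fixed to dummy values.)  Uniform sequential sampling without replacement
induces the uniform distribution on these configurations. -/
noncomputable def saConfigs (n : ℕ) (hn : 0 < n) (K : Multiset ℕ) :
    Finset ((Fin n → Finset (Fin n)) × (Fin n → Fin n)) :=
  Finset.univ.filter fun c =>
    (∀ i : Fin n, (i : ℕ) < (K.sort (· ≤ ·)).length →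
      (c.1 i).card = (K.sort (· ≤ ·)).getD (i : ℕ) 0 - 1) ∧
    (∀ i : Fin n, (K.sort (· ≤ ·)).length ≤ (i : ℕ) → c.1 i = ∅ ∧ c.2 i = ⟨0, hn⟩) ∧
    (∀ i j : Fin n, i ≠ j → Disjoint (c.1 i) (c.1 j)) ∧
    (∀ i j : Fin n, (i : ℕ) < (K.sort (· ≤ ·)).length →
      (j : ℕ) < (K.sort (· ≤ ·)).length → c.2 i = c.2 j → i = j) ∧
    ∀ i : Fin n, (i : ℕ) < (K.sort (· ≤ ·)).length → ∀ j : Fin n, c.2 i ∉ c.1 j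

/-- Transition probability of the sample-and-add Markov chain `SA_n` from the partition `P`
to `P'`, for the probability vector with entries `q1n = q(n:1)` and `qcn K = q(n:K;s)`:
with probability `q(n:1)` a uniform ball is moved to a new singleton box, and with
probability `q(n:K;s)` a uniform sampling configuration for `K` is chosen and the sampled
sets are added to the boxes of the marked balls. -/
noncomputable def saT (n : ℕ) (hn : 0 < n) (q1n : ℝ) (qcn : Multiset ℕ → ℝ)
    (P P' : Finset (Finset (Fin n))) : ℝ :=
  q1n * (1 / (n : ℝ)) * ∑ b : Fin n, (if P' = addSingleton P b then 1 else 0)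
    + ∑ K ∈ collisionSets n,
        qcn K * (1 / ((saConfigs n hn K).card : ℝ)) *
          ∑ c ∈ saConfigs n hn K, (if P' = mergeMove P c.1 c.2 then 1 else 0)

/-- The action of a permutation `g` of `[n]` on a partition of `[n]`. -/
def permPart {n : ℕ} (g : Equiv.Perm (Fin n)) (P : Finset (Finset (Fin n))) :
    Finset (Finset (Fin n)) :=
  P.image fun A => A.image g

section Aux

variable {n : ℕ}

lemma permPart_permPart (g h : Equiv.Perm (Fin n)) (P : Finset (Finset (Fin n))) :
    permPart g (permPart h P) = permPart (g * h) P := by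
  simp [permPart, Finset.image_image, Function.comp_def]

lemma permPart_inv_permPart (g : Equiv.Perm (Fin n)) (P : Finset (Finset (Fin n))) :
    permPart g⁻¹ (permPart g P) = P := by
  rw [permPart_permPart, inv_mul_cancel]
  simp [permPart]

lemma permPart_injective (g : Equiv.Perm (Fin n)) :
    Function.Injective (permPart (n := n) g) := by
  intro P Q h
  have := congrArg (permPart g⁻¹) h
  rwa [permPart_inv_permPart, permPart_inv_permPart] at this

lemma addSingleton_perm (g : Equiv.Perm (Fin n)) (P : Finset (Finset (Fin n))) (b : Fin n) :
    addSingleton (permPart g P) (g b) = permPart g (addSingleton P b) := by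
  have hfun : ∀ A : Finset (Fin n), (A.image g).erase (g b) = (A.erase b).image g :=
    fun A => (Finset.image_erase g.injective A b).symm
  unfold addSingleton permPart
  rw [Finset.image_insert, Finset.image_singleton,
      Finset.image_erase (Finset.image_injective g.injective), Finset.image_empty,
      Finset.image_image, Finset.image_image]
  simp only [Function.comp_def, hfun]

lemma dest_congr (A : Fin n → Finset (Fin n)) (t t' : Fin n → Fin n)
    (h : ∀ i, A i ≠ ∅ → t i = t' i) : dest A t = dest A t' := by
  funext x
  unfold dest
  by_cases hx : ∃ i, x ∈ A i
  · simp only [dif_pos hx]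
    exact h _ (Finset.ne_empty_of_mem hx.choose_spec)
  · simp [hx]

lemma dest_perm (g : Equiv.Perm (Fin n)) (A : Fin n → Finset (Fin n)) (t : Fin n → Fin n)
    (hdisj : ∀ i j, i ≠ j → Disjoint (A i) (A j)) (x : Fin n) :
    dest (fun i => (A i).image g) (fun i => g (t i)) (g x) = g (dest A t x) := by
  by_cases hx : ∃ i, x ∈ A i
  · have hx' : ∃ i, g x ∈ (A i).image g := ⟨hx.choose, Finset.mem_image_of_mem g hx.choose_spec⟩
    have hmem : x ∈ A hx'.choose := by
      have := hx'.choose_spec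
      rcases Finset.mem_image.mp this with ⟨y, hy, hyx⟩
      rwa [g.injective hyx] at hy
    have hi : hx'.choose = hx.choose := by
      by_contra hne
      exact (Finset.disjoint_left.mp (hdisj _ _ hne) hmem) hx.choose_spec
    simp only [dest, dif_pos hx, dif_pos hx', hi]
  · have hx' : ¬ ∃ i, g x ∈ (A i).image g := by
      rintro ⟨i, hi⟩
      rcases Finset.mem_image.mp hi with ⟨y, hy, hyx⟩
      exact hx ⟨i, by rwa [g.injective hyx] at hy⟩
    simp [dest, hx, hx']

lemma mergeMove_perm (g : Equiv.Perm (Fin n)) (P : Finset (Finset (Fin n)))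
    (A : Fin n → Finset (Fin n)) (t : Fin n → Fin n)
    (hdisj : ∀ i j, i ≠ j → Disjoint (A i) (A j)) :
    mergeMove (permPart g P) (fun i => (A i).image g) (fun i => g (t i))
      = permPart g (mergeMove P A t) := by
  unfold mergeMove permPart
  rw [Finset.image_erase (Finset.image_injective g.injective), Finset.image_empty,
      Finset.image_image, Finset.image_image]
  congr 1
  congr 1
  funext B
  simp only [Function.comp]
  ext x
  simp only [Finset.mem_filter, Finset.mem_univ, true_and, Finset.mem_image]
  constructor
  · intro hx
    refine ⟨g⁻¹ x, ?_, by simp⟩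
    have hd := dest_perm g A t hdisj (g⁻¹ x)
    rw [show g (g⁻¹ x) = x from g.apply_symm_apply x] at hd
    rcases hx with ⟨a, ha, hax⟩
    rw [hd] at hax
    rwa [← g.injective hax]
  · rintro ⟨y, hy, rfl⟩
    rw [dest_perm g A t hdisj y]
    exact ⟨dest A t y, hy, rfl⟩

/-- The action of `g` on sampling configurations. -/
noncomputable def confMap (n : ℕ) (hn : 0 < n) (K : Multiset ℕ) (g : Equiv.Perm (Fin n))
    (c : (Fin n → Finset (Fin n)) × (Fin n → Fin n)) :
    (Fin n → Finset (Fin n)) × (Fin n → Fin n) :=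
  (fun i => (c.1 i).image g,
   fun i => if (i : ℕ) < (K.sort (· ≤ ·)).length then g (c.2 i) else ⟨0, hn⟩)

lemma confMap_mem (hn : 0 < n) (K : Multiset ℕ) (g : Equiv.Perm (Fin n))
    {c : (Fin n → Finset (Fin n)) × (Fin n → Fin n)} (hc : c ∈ saConfigs n hn K) :
    confMap n hn K g c ∈ saConfigs n hn K := by
  simp only [saConfigs, Finset.mem_filter, Finset.mem_univ, true_and] at hc ⊢
  obtain ⟨h1, h2, h3, h4, h5⟩ := hc
  refine ⟨?_, ?_, ?_, ?_, ?_⟩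
  · intro i hi
    simp only [confMap, Finset.card_image_of_injective _ g.injective]
    exact h1 i hi
  · intro i hi
    simp only [confMap, (h2 i hi).1, Finset.image_empty, if_neg (not_lt.mpr hi), and_self]
  · intro i j hij
    exact (Finset.disjoint_image g.injective).mpr (h3 i j hij)
  · intro i j hi hj heq
    simp only [confMap, if_pos hi, if_pos hj] at heq
    exact h4 i j hi hj (g.injective heq)
  · intro i hi j hmem
    simp only [confMap, if_pos hi, Finset.mem_image] at hmem
    rcases hmem with ⟨y, hy, hyx⟩
    exact h5 i hi j (by rwa [g.injective hyx] at hy)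

lemma confMap_confMap (hn : 0 < n) (K : Multiset ℕ) (g : Equiv.Perm (Fin n))
    {c : (Fin n → Finset (Fin n)) × (Fin n → Fin n)} (hc : c ∈ saConfigs n hn K) :
    confMap n hn K g⁻¹ (confMap n hn K g c) = c := by
  simp only [saConfigs, Finset.mem_filter, Finset.mem_univ, true_and] at hc
  obtain ⟨h1, h2, h3, h4, h5⟩ := hc
  unfold confMap
  refine Prod.ext ?_ ?_
  · funext i
    ext x
    simp only [Finset.mem_image]
    constructor
    · rintro ⟨y, ⟨z, hz, rfl⟩, rfl⟩; simpa using hz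
    · intro hx; exact ⟨g x, ⟨x, hx, rfl⟩, by simp⟩
  · funext i
    by_cases hi : (i : ℕ) < (K.sort (· ≤ ·)).length
    · simp only [if_pos hi]; exact g.symm_apply_apply _
    · simp only [if_neg hi]
      exact ((h2 i (not_lt.mp hi)).2).symm

lemma mergeMove_confMap (hn : 0 < n) (K : Multiset ℕ) (g : Equiv.Perm (Fin n))
    (P : Finset (Finset (Fin n)))
    {c : (Fin n → Finset (Fin n)) × (Fin n → Fin n)} (hc : c ∈ saConfigs n hn K) :
    mergeMove (permPart g P) (confMap n hn K g c).1 (confMap n hn K g c).2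
      = permPart g (mergeMove P c.1 c.2) := by
  simp only [saConfigs, Finset.mem_filter, Finset.mem_univ, true_and] at hc
  obtain ⟨h1, h2, h3, h4, h5⟩ := hc
  have hA : (confMap n hn K g c).1 = fun i => (c.1 i).image g := rfl
  have ht : dest (confMap n hn K g c).1 (confMap n hn K g c).2
      = dest (fun i => (c.1 i).image g) (fun i => g (c.2 i)) := by
    rw [hA]
    apply dest_congr
    intro i hi
    have hne : c.1 i ≠ ∅ := by
      intro h; apply hi; simp [h]
    have hilt : (i : ℕ) < (K.sort (· ≤ ·)).length := by
      by_contra h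
      exact hne (h2 i (not_lt.mp h)).1
    simp only [confMap, if_pos hilt]
  have heq : mergeMove (permPart g P) (confMap n hn K g c).1 (confMap n hn K g c).2
      = mergeMove (permPart g P) (fun i => (c.1 i).image g) (fun i => g (c.2 i)) := by
    unfold mergeMove
    rw [ht]
  rw [heq, mergeMove_perm g P c.1 c.2 h3]

lemma saT_perm (hn : 0 < n) (q1n : ℝ) (qcn : Multiset ℕ → ℝ)
    (g : Equiv.Perm (Fin n)) (P P' : Finset (Finset (Fin n))) :
    saT n hn q1n qcn (permPart g P) (permPart g P') = saT n hn q1n qcn P P' := by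
  unfold saT
  congr 1
  · congr 1
    rw [← Equiv.sum_comp g
      (fun b => if permPart g P' = addSingleton (permPart g P) b then (1:ℝ) else 0)]
    apply Finset.sum_congr rfl
    intro b _
    simp only [addSingleton_perm]
    by_cases h : P' = addSingleton P b
    · rw [if_pos (by rw [h]), if_pos h]
    · rw [if_neg (fun hc => h (permPart_injective g hc)), if_neg h]
  · apply Finset.sum_congr rfl
    intro K _
    congr 1
    refine Finset.sum_nbij' (fun c => confMap n hn K g⁻¹ c) (fun c => confMap n hn K g c)
      ?_ ?_ ?_ ?_ ?_
    · intro c hc; exact confMap_mem hn K g⁻¹ hc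
    · intro c hc; exact confMap_mem hn K g hc
    · intro c hc
      have h0 := confMap_confMap hn K g⁻¹ hc
      rwa [inv_inv] at h0
    · intro c hc; exact confMap_confMap hn K g hc
    · intro c hc
      have hc' : confMap n hn K g⁻¹ c ∈ saConfigs n hn K := confMap_mem hn K g⁻¹ hc
      have hmm := mergeMove_confMap hn K g P hc'
      have hcc : confMap n hn K g (confMap n hn K g⁻¹ c) = c := by
        have h0 := confMap_confMap hn K g⁻¹ hc
        rwa [inv_inv] at h0
      rw [hcc] at hmm
      rw [hmm]
      by_cases h : P' = mergeMove P (confMap n hn K g⁻¹ c).1 (confMap n hn K g⁻¹ c).2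
      · rw [if_pos (by rw [h]), if_pos h]
      · rw [if_neg (fun hcng => h (permPart_injective g hcng)), if_neg h]

end Aux

/-- If `Π_n` is an exchangeable random partition of `[n]` (law `μ`
invariant under all permutations of `[n]`) and `Π_n'` is obtained from `Π_n` by one step of
the sample-and-add operation `SA_n`, then `Π_n'` is exchangeable. -/
theorem sa_preserves_exchangeability (n : ℕ) (hn : 0 < n)
    (q1n : ℝ) (qcn : Multiset ℕ → ℝ)
    (hq1 : 0 ≤ q1n) (hqc : ∀ K, 0 ≤ qcn K)
    (hsum : q1n + ∑ K ∈ collisionSets n, qcn K = 1)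
    (μ : Finset (Finset (Fin n)) → ℝ)
    (hμnn : ∀ P, 0 ≤ μ P)
    (hμsupp : ∀ P, ¬ IsPartitionOf n P → μ P = 0)
    (hμ1 : ∑ P ∈ Finset.univ.filter (fun P => IsPartitionOf n P), μ P = 1)
    (hexch : ∀ (g : Equiv.Perm (Fin n)) (P : Finset (Finset (Fin n))),
      μ (permPart g P) = μ P) :
    ∀ (g : Equiv.Perm (Fin n)) (P' : Finset (Finset (Fin n))),
      (∑ P : Finset (Finset (Fin n)), μ P * saT n hn q1n qcn P (permPart g P')) =
        ∑ P : Finset (Finset (Fin n)), μ P * saT n hn q1n qcn P P' := by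
  
  intro g P'
  have e : Function.Bijective (permPart (n := n) g) :=
    ⟨permPart_injective g, fun P => ⟨permPart g⁻¹ P, by
      have h0 := permPart_inv_permPart g⁻¹ P
      rwa [inv_inv] at h0⟩⟩
  rw [← Function.Bijective.sum_comp e
    (fun P => μ P * saT n hn q1n qcn P (permPart g P'))]
  apply Fintype.sum_congr
  intro P
  rw [hexch, saT_perm]
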